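/- Let r : [0,1/2] × (−π/6, π/6) → ℝ be the implicitly defined function satisfying (1+3t) r³ − 9(1+t) r − 6√3 sin(3θ) = 0 with r_A(θ)/(1+t) ≤ r(t,θ) ≤ r_A(θ), where r_A(θ) = 2√3 cos(θ−π/6). Then the logarithmic derivative satisfies 0 ≤ r_θ(t,θ)/r(t,θ) ≤ tan(π/6 − θ) ≤ √3 for all θ ∈ (−π/6, π/6). -/

import Mathlib

open Real

/-- The inverse polar equation of a side of the equilateral triangle `T₀`. -/
noncomputable def rA (θ : ℝ) : ℝ := 2 * Real.sqrt 3 * Real.cos (θ - π / 6)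

/-- Let `r(t,θ)` be the implicitly defined function satisfying
`(1+3t) r³ − 9(1+t) r − 6√3 sin(3θ) = 0` with `r_A(θ)/(1+t) ≤ r(t,θ) ≤ r_A(θ)`.
Then the logarithmic derivative satisfies
`0 ≤ r_θ/r ≤ tan(π/6 − θ) ≤ √3` on `(−π/6, π/6)`. -/
theorem log_deriv_bounds (r : ℝ → ℝ → ℝ)
    (heq : ∀ t ∈ Set.Icc (0 : ℝ) (1 / 2), ∀ θ ∈ Set.Ioo (-(π / 6)) (π / 6),
      (1 + 3 * t) * (r t θ) ^ 3 - 9 * (1 + t) * (r t θ)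
        - 6 * Real.sqrt 3 * Real.sin (3 * θ) = 0)
    (hbd : ∀ t ∈ Set.Icc (0 : ℝ) (1 / 2), ∀ θ ∈ Set.Ioo (-(π / 6)) (π / 6),
      rA θ / (1 + t) ≤ r t θ ∧ r t θ ≤ rA θ)
    (hdiff : ∀ t ∈ Set.Icc (0 : ℝ) (1 / 2), ∀ θ ∈ Set.Ioo (-(π / 6)) (π / 6),
      DifferentiableAt ℝ (r t) θ) :
    ∀ t ∈ Set.Icc (0 : ℝ) (1 / 2), ∀ θ ∈ Set.Ioo (-(π / 6)) (π / 6),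
      0 ≤ deriv (r t) θ / r t θ ∧
      deriv (r t) θ / r t θ ≤ Real.tan (π / 6 - θ) ∧
      Real.tan (π / 6 - θ) ≤ Real.sqrt 3 := by
  intro t ht θ hθ
  obtain ⟨ht0, ht1⟩ := ht
  obtain ⟨hθ1, hθ2⟩ := hθ
  have hπ := Real.pi_pos
  have hx3 : Real.sqrt 3 * Real.sqrt 3 = 3 := Real.mul_self_sqrt (by norm_num)
  have hx3pos : 0 < Real.sqrt 3 := Real.sqrt_pos.mpr (by norm_num)
  set R := r t θ with hRdef
  set R' := deriv (r t) θ with hR'def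
  have hcθ : 0 < Real.cos θ := Real.cos_pos_of_mem_Ioo ⟨by linarith, by linarith⟩
  have hc3 : 0 < Real.cos (3 * θ) := Real.cos_pos_of_mem_Ioo ⟨by linarith, by linarith⟩
  have hca : 0 < Real.cos (θ - π / 6) := Real.cos_pos_of_mem_Ioo ⟨by linarith, by linarith⟩
  have hsθ : -(1/2 : ℝ) < Real.sin θ := by
    have h := Real.sin_lt_sin_of_lt_of_le_pi_div_two (x := -(π/6)) (y := θ)
      (by linarith) (by linarith) hθ1
    rw [Real.sin_neg, Real.sin_pi_div_six] at h
    linarith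
  have hpyth : Real.sin θ ^ 2 + Real.cos θ ^ 2 = 1 := Real.sin_sq_add_cos_sq θ
  have hA : 0 < rA θ := by
    unfold rA; positivity
  -- key positivity: rA θ + √3 sin 3θ > 0
  have key1 : 0 < rA θ + Real.sqrt 3 * Real.sin (3 * θ) := by
    have hsub : 0 < Real.sqrt 3 * Real.cos θ + 3 * Real.sin θ := by
      rcases le_or_gt 0 (Real.sin θ) with hs | hs
      · nlinarith [mul_pos hx3pos hcθ]
      · have hsq : (-(3 * Real.sin θ)) ^ 2 < (Real.sqrt 3 * Real.cos θ) ^ 2 := by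
          nlinarith [hx3, hpyth, hsθ, hs, sq_nonneg (Real.cos θ)]
        have := lt_of_pow_lt_pow_left₀ 2 (le_of_lt (mul_pos hx3pos hcθ)) hsq
        linarith
    have hsub2 : 0 < Real.sqrt 3 * Real.cos θ + Real.sin θ := by
      rcases le_or_gt 0 (Real.sin θ) with hs | hs
      · nlinarith [mul_pos hx3pos hcθ]
      · linarith
    have hfact : 2 * Real.sqrt 3 * (Real.cos θ * (Real.sqrt 3 / 2) + Real.sin θ * (1 / 2))
        + Real.sqrt 3 * (3 * Real.sin θ - 4 * Real.sin θ ^ 3)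
        = Real.cos θ * ((Real.sqrt 3 * Real.cos θ + Real.sin θ)
            * (Real.sqrt 3 * Real.cos θ + 3 * Real.sin θ)) := by
      linear_combination (Real.sin θ ^ 2 * Real.cos θ) * hx3
        - (Real.sqrt 3 * Real.sqrt 3 * Real.cos θ + 4 * Real.sqrt 3 * Real.sin θ) * hpyth
    unfold rA
    rw [Real.cos_sub, Real.sin_three_mul, Real.cos_pi_div_six, Real.sin_pi_div_six, hfact]
    exact mul_pos hcθ (mul_pos hsub2 hsub)
  have htpos : (0:ℝ) < 1 + t := by linarith
  have hRlow : rA θ / (1 + t) ≤ R := (hbd t ⟨ht0, ht1⟩ θ ⟨hθ1, hθ2⟩).1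
  have hRpos : 0 < R := lt_of_lt_of_le (div_pos hA htpos) hRlow
  have key1' : rA θ ≤ (1 + t) * R := by
    rw [div_le_iff₀ htpos] at hRlow; linarith [hRlow]
  have hDen : 0 < (1 + t) * R + Real.sqrt 3 * Real.sin (3 * θ) := by linarith
  have hEq0 := heq t ⟨ht0, ht1⟩ θ ⟨hθ1, hθ2⟩
  have hDR : ((1 + 3*t) * R^2 - 3*(1 + t)) * R
      = 6 * ((1 + t) * R + Real.sqrt 3 * Real.sin (3 * θ)) := by
    linear_combination hEq0
  have hD : 0 < (1 + 3*t) * R^2 - 3*(1 + t) := by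
    nlinarith [hDR, hDen, hRpos]
  -- derivative equation
  have hRd : HasDerivAt (r t) R' θ := (hdiff t ⟨ht0, ht1⟩ θ ⟨hθ1, hθ2⟩).hasDerivAt
  have h3θ : HasDerivAt (fun x => Real.sin (3 * x)) (Real.cos (3 * θ) * 3) θ := by
    have h := ((hasDerivAt_id θ).const_mul (3:ℝ)).sin
    simpa using h
  have hg : HasDerivAt
      (fun x => (1 + 3*t) * (r t x)^3 - 9*(1 + t) * (r t x) - 6 * Real.sqrt 3 * Real.sin (3 * x))
      ((1 + 3*t) * (3 * R^2 * R') - 9*(1 + t) * R' - 6 * Real.sqrt 3 * (Real.cos (3*θ) * 3)) θ := by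
    have h1 := (hRd.fun_pow 3).const_mul (1 + 3*t)
    have h2 := hRd.const_mul (9*(1 + t))
    have h3 := h3θ.const_mul (6 * Real.sqrt 3)
    exact ((h1.fun_sub h2).fun_sub h3).congr_deriv (by norm_num [hRdef])
  have hg0 : HasDerivAt
      (fun x => (1 + 3*t) * (r t x)^3 - 9*(1 + t) * (r t x) - 6 * Real.sqrt 3 * Real.sin (3 * x))
      0 θ := by
    have hev : (fun x => (1 + 3*t) * (r t x)^3 - 9*(1 + t) * (r t x) - 6 * Real.sqrt 3 * Real.sin (3 * x)) =ᶠ[nhds θ] (fun _ => (0:ℝ)) := by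
      filter_upwards [Ioo_mem_nhds hθ1 hθ2] with x hx
      exact heq t ⟨ht0, ht1⟩ x hx
    exact (hasDerivAt_const θ (0:ℝ)).congr_of_eventuallyEq hev
  have huniq := hg.unique hg0
  have hderiv : ((1 + 3*t) * R^2 - 3*(1 + t)) * R' = 6 * Real.sqrt 3 * Real.cos (3*θ) := by
    linear_combination huniq / 3
  have hR'eq : R' = 6 * Real.sqrt 3 * Real.cos (3*θ) / ((1 + 3*t) * R^2 - 3*(1 + t)) := by
    rw [eq_div_iff hD.ne']
    linear_combination hderiv
  have hR'nonneg : 0 ≤ R' := by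
    rw [hR'eq]
    exact div_nonneg (by positivity) hD.le
  have hratio : R' / R = Real.sqrt 3 * Real.cos (3*θ) / ((1 + t) * R + Real.sqrt 3 * Real.sin (3*θ)) := by
    rw [hR'eq, div_div, hDR]
    rw [show (6:ℝ) * Real.sqrt 3 * Real.cos (3*θ) = 6 * (Real.sqrt 3 * Real.cos (3*θ)) by ring,
      mul_div_mul_left _ _ (by norm_num : (6:ℝ) ≠ 0)]
  have hsb : 0 < Real.sin (π/6 - θ) := Real.sin_pos_of_pos_of_lt_pi (by linarith) (by linarith)
  have hcb : 0 < Real.cos (π/6 - θ) := Real.cos_pos_of_mem_Ioo ⟨by linarith, by linarith⟩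
  have htan : Real.tan (π/6 - θ) = Real.sqrt 3 * Real.cos (3*θ) / (rA θ + Real.sqrt 3 * Real.sin (3*θ)) := by
    rw [Real.tan_eq_sin_div_cos, div_eq_div_iff hcb.ne' key1.ne']
    unfold rA
    rw [Real.sin_sub, Real.cos_sub, Real.cos_sub, Real.sin_three_mul, Real.cos_three_mul,
      Real.sin_pi_div_six, Real.cos_pi_div_six]
    linear_combination (-2 * (Real.sqrt 3 * Real.sqrt 3) * (Real.cos θ ^ 2 - Real.sin θ ^ 2)
        - 2 * Real.sqrt 3 * Real.sin θ * Real.cos θ) * hpyth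
      + (-(Real.sqrt 3 / 2) * Real.sin θ * Real.cos θ) * hx3
  refine ⟨div_nonneg hR'nonneg hRpos.le, ?_, ?_⟩
  · rw [hratio, htan]
    apply div_le_div_of_nonneg_left (by positivity) key1
    linarith
  · have h3 : Real.tan (π/3) = Real.sqrt 3 := by
      rw [Real.tan_eq_sin_div_cos, Real.sin_pi_div_three, Real.cos_pi_div_three]
      ring
    rw [← h3]
    exact (Real.tan_lt_tan_of_lt_of_lt_pi_div_two (by linarith) (by linarith) (by linarith)).le
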